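/- If n is a positive multiple of 3, then every n-transversal edge of the n-dimensional varietal hypercube VQ_n is contained in a cycle of length 5. -/
import Mathlib


/-- The relation `I = {(00,00),(01,01),(10,11),(11,10)}` on pairs of bits,
where a pair `(a, b)` records two consecutive bits (higher bit first). -/
def vqCross (p q : Bool × Bool) : Prop :=
  (p = (false, false) ∧ q = (false, false)) ∨
  (p = (false, true) ∧ q = (false, true)) ∨
  (p = (true, false) ∧ q = (true, true)) ∨
  (p = (true, true) ∧ q = (true, false))

/-- Adjacency in the varietal hypercube `VQ n`.  A vertex is a function
`Fin n → Bool`, the bit `x_k` (1-indexed, `x = x_n x_{n-1} ⋯ x_1`) being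
the value at index `k - 1`; the leading bit `x_n` is at index `n - 1`. -/
def vqAdj : (n : ℕ) → (Fin n → Bool) → (Fin n → Bool) → Prop
  | 0, _, _ => False
  | 1, x, y => x ≠ y
  | (n + 2), x, y =>
    if x (Fin.last (n + 1)) = y (Fin.last (n + 1)) then
      -- both in the same copy of `VQ (n+1)`
      vqAdj (n + 1) (fun i => x i.castSucc) (fun i => y i.castSucc)
    else
      if 3 ∣ (n + 2) then
        (∀ i : Fin (n + 2), i.val < n - 1 → x i = y i) ∧
        vqCross (x ⟨n, by omega⟩, x ⟨n - 1, by omega⟩)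
          (y ⟨n, by omega⟩, y ⟨n - 1, by omega⟩)
      else
        ∀ i : Fin (n + 1), x i.castSucc = y i.castSucc

/-- The `n`-dimensional varietal hypercube `VQ_n`. -/
def varietalCube (n : ℕ) : SimpleGraph (Fin n → Bool) :=
  SimpleGraph.fromRel (vqAdj n)

lemma vqCross_symm {p q : Bool × Bool} (h : vqCross p q) : vqCross q p := by
  unfold vqCross at *; tauto

lemma vqCross_flip {a b a' b' : Bool} (h : vqCross (a, b) (a', b')) :
    vqCross (!a, b) (!a', !b') := by
  unfold vqCross at *
  rcases h with ⟨h1, h2⟩ | ⟨h1, h2⟩ | ⟨h1, h2⟩ | ⟨h1, h2⟩ <;>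
    simp_all [Prod.ext_iff]

lemma vqAdj_top (m : ℕ) (h3 : ¬ 3 ∣ (m+1)) (u v : Fin (m+1) → Bool)
    (hne : u ⟨m, by omega⟩ ≠ v ⟨m, by omega⟩)
    (h : ∀ i : Fin (m+1), i.val < m → u i = v i) : vqAdj (m+1) u v := by
  match m with
  | 0 =>
    show u ≠ v
    intro hc; exact hne (by rw [hc])
  | (m'+1) =>
    show vqAdj (m'+2) u v
    rw [vqAdj]
    have hlast : Fin.last (m'+1) = (⟨m'+1, by omega⟩ : Fin (m'+2)) := rfl
    rw [hlast, if_neg hne, if_neg h3]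
    intro i
    exact h i.castSucc (by simp [Fin.castSucc]; try omega)

lemma vqAdj_flip_a (k : ℕ) (h3 : 3 ∣ (k+3)) (u v : Fin (k+3) → Bool)
    (hne : u ⟨k+1, by omega⟩ ≠ v ⟨k+1, by omega⟩)
    (h : ∀ i : Fin (k+3), i.val ≠ k+1 → u i = v i) : vqAdj (k+3) u v := by
  show vqAdj (k+1+2) u v
  rw [vqAdj]
  have htop : u (Fin.last (k+2)) = v (Fin.last (k+2)) := h _ (by simp [Fin.last]; try omega)
  rw [if_pos htop]
  exact vqAdj_top (k+1) (by omega) _ _ hne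
    (fun i hi => h i.castSucc (by simp [Fin.castSucc]; try omega))

lemma vqAdj_flip_b (k : ℕ) (h3 : 3 ∣ (k+3)) (u v : Fin (k+3) → Bool)
    (hne : u ⟨k, by omega⟩ ≠ v ⟨k, by omega⟩)
    (h : ∀ i : Fin (k+3), i.val ≠ k → u i = v i) : vqAdj (k+3) u v := by
  show vqAdj (k+1+2) u v
  rw [vqAdj]
  rw [if_pos (h _ (by simp [Fin.last]; try omega))]
  show vqAdj (k+2) _ _
  rw [vqAdj]
  rw [if_pos (show _ = _ from
    h ((Fin.last (k+1)).castSucc) (by simp [Fin.last, Fin.castSucc]; try omega))]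
  exact vqAdj_top k (by omega) _ _ hne
    (fun i hi => h (i.castSucc.castSucc) (by simp [Fin.castSucc]; try omega))

lemma vqAdj_cross (k : ℕ) (h3 : 3 ∣ (k+3)) (u v : Fin (k+3) → Bool)
    (hne : u ⟨k+2, by omega⟩ ≠ v ⟨k+2, by omega⟩)
    (hc : vqCross (u ⟨k+1, by omega⟩, u ⟨k, by omega⟩) (v ⟨k+1, by omega⟩, v ⟨k, by omega⟩))
    (h : ∀ i : Fin (k+3), i.val < k → u i = v i) : vqAdj (k+3) u v := by
  show vqAdj (k+1+2) u v
  rw [vqAdj]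
  rw [if_neg (show ¬ u (Fin.last (k+2)) = v (Fin.last (k+2)) from hne), if_pos h3]
  exact ⟨fun i hi => h i (by omega), by simpa using hc⟩

lemma vqAdj_cross_inv (k : ℕ) (h3 : 3 ∣ (k+3)) (u v : Fin (k+3) → Bool)
    (hne : u ⟨k+2, by omega⟩ ≠ v ⟨k+2, by omega⟩) (h : vqAdj (k+3) u v) :
    (∀ i : Fin (k+3), i.val < k → u i = v i) ∧
      vqCross (u ⟨k+1, by omega⟩, u ⟨k, by omega⟩) (v ⟨k+1, by omega⟩, v ⟨k, by omega⟩) := by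
  have h' : vqAdj (k+1+2) u v := h
  rw [vqAdj,
    if_neg (show ¬ u (Fin.last (k+2)) = v (Fin.last (k+2)) from hne), if_pos h3] at h'
  exact ⟨fun i hi => h'.1 i (by omega), by simpa using h'.2⟩

def vq5V (k : ℕ) (x : Fin (k+3) → Bool) (t a b : Bool) : Fin (k+3) → Bool :=
  fun i => if i.val = k+2 then t else if i.val = k+1 then a else if i.val = k then b else x i

lemma vq5V_top (k x t a b) : vq5V k x t a b ⟨k+2, by omega⟩ = t := by simp [vq5V]
lemma vq5V_a (k x t a b) : vq5V k x t a b ⟨k+1, by omega⟩ = a := by simp [vq5V]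
lemma vq5V_b (k x t a b) : vq5V k x t a b ⟨k, by omega⟩ = b := by simp [vq5V]

lemma vq5V_ne (k : ℕ) (x : Fin (k+3) → Bool) {t a b t' a' b' : Bool}
    (h : t ≠ t' ∨ a ≠ a' ∨ b ≠ b') : vq5V k x t a b ≠ vq5V k x t' a' b' := by
  intro hc
  rcases h with h | h | h
  · exact h (by rw [← vq5V_top k x t a b, ← vq5V_top k x t' a' b', hc])
  · exact h (by rw [← vq5V_a k x t a b, ← vq5V_a k x t' a' b', hc])
  · exact h (by rw [← vq5V_b k x t a b, ← vq5V_b k x t' a' b', hc])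

lemma vq5V_adj_a (k : ℕ) (h3 : 3 ∣ (k+3)) (x : Fin (k+3) → Bool) (t a b a' : Bool)
    (h : a ≠ a') : (varietalCube (k+3)).Adj (vq5V k x t a b) (vq5V k x t a' b) := by
  rw [varietalCube, SimpleGraph.fromRel_adj]
  refine ⟨vq5V_ne k x (Or.inr (Or.inl h)), Or.inl ?_⟩
  refine vqAdj_flip_a k h3 _ _ (by simpa [vq5V_a] using h) ?_
  intro i hi
  unfold vq5V
  split_ifs <;> simp_all

lemma vq5V_adj_b (k : ℕ) (h3 : 3 ∣ (k+3)) (x : Fin (k+3) → Bool) (t a b b' : Bool)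
    (h : b ≠ b') : (varietalCube (k+3)).Adj (vq5V k x t a b) (vq5V k x t a b') := by
  rw [varietalCube, SimpleGraph.fromRel_adj]
  refine ⟨vq5V_ne k x (Or.inr (Or.inr h)), Or.inl ?_⟩
  refine vqAdj_flip_b k h3 _ _ (by simpa [vq5V_b] using h) ?_
  intro i hi
  unfold vq5V
  split_ifs <;> simp_all

lemma vq5V_adj_cross (k : ℕ) (h3 : 3 ∣ (k+3)) (x : Fin (k+3) → Bool) (t a b t' a' b' : Bool)
    (h : t ≠ t') (hc : vqCross (a, b) (a', b')) :
    (varietalCube (k+3)).Adj (vq5V k x t a b) (vq5V k x t' a' b') := by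
  rw [varietalCube, SimpleGraph.fromRel_adj]
  refine ⟨vq5V_ne k x (Or.inl h), Or.inl ?_⟩
  refine vqAdj_cross k h3 _ _ (by simpa [vq5V_top] using h)
    (by simpa [vq5V_a, vq5V_b] using hc) ?_
  intro i hi
  unfold vq5V
  split_ifs <;> simp_all

lemma cycle5 {V : Type*} (G : SimpleGraph V) (v1 v2 v3 v4 v5 : V)
    (h12 : G.Adj v1 v2) (h23 : G.Adj v2 v3) (h34 : G.Adj v3 v4)
    (h45 : G.Adj v4 v5) (h51 : G.Adj v5 v1)
    (d13 : v1 ≠ v3) (d14 : v1 ≠ v4) (d24 : v2 ≠ v4) (d25 : v2 ≠ v5) (d35 : v3 ≠ v5) :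
    ∃ C : G.Walk v1 v1, C.IsCycle ∧ C.length = 5 ∧ s(v1, v2) ∈ C.edges := by
  refine ⟨.cons h12 (.cons h23 (.cons h34 (.cons h45 (.cons h51 .nil)))), ?_, rfl, by simp⟩
  have d12 := h12.ne; have d23 := h23.ne; have d34 := h34.ne
  have d45 := h45.ne; have d51 := h51.ne
  simp [SimpleGraph.Walk.isCycle_def, SimpleGraph.Walk.isTrail_def,
    List.nodup_cons, Sym2.eq_iff]
  aesop

/-- If `n` is a positive multiple of `3`, every `n`-transversal edge of `VQ_n`
(an edge joining a vertex with leading bit `0` to one with leading bit `1`)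
is contained in a cycle of length `5`. -/
theorem stmt6 (n : ℕ) (hn : 1 ≤ n) (h3 : 3 ∣ n) (x y : Fin n → Bool)
    (hx : x ⟨n - 1, by omega⟩ = false) (hy : y ⟨n - 1, by omega⟩ = true)
    (hadj : (varietalCube n).Adj x y) :
    ∃ (v : Fin n → Bool) (C : (varietalCube n).Walk v v),
      C.IsCycle ∧ C.length = 5 ∧ s(x, y) ∈ C.edges := by
  obtain ⟨k, rfl⟩ : ∃ k, n = k + 3 := ⟨n - 3, by omega⟩
  have hx' : x ⟨k+2, by omega⟩ = false := hx
  have hy' : y ⟨k+2, by omega⟩ = true := hy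
  rw [varietalCube, SimpleGraph.fromRel_adj] at hadj
  obtain ⟨hne, hor⟩ := hadj
  have hnebit : x ⟨k+2, by omega⟩ ≠ y ⟨k+2, by omega⟩ := by rw [hx', hy']; simp
  have key : (∀ i : Fin (k+3), i.val < k → x i = y i) ∧
      vqCross (x ⟨k+1, by omega⟩, x ⟨k, by omega⟩) (y ⟨k+1, by omega⟩, y ⟨k, by omega⟩) := by
    rcases hor with h | h
    · exact vqAdj_cross_inv k h3 x y hnebit h
    · obtain ⟨h1, h2⟩ := vqAdj_cross_inv k h3 y x (fun hc => hnebit hc.symm) h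
      exact ⟨fun i hi => (h1 i hi).symm, vqCross_symm h2⟩
  obtain ⟨heq, hc⟩ := key
  set a := x ⟨k+1, by omega⟩ with ha
  set b := x ⟨k, by omega⟩ with hb
  set a' := y ⟨k+1, by omega⟩ with ha'
  set b' := y ⟨k, by omega⟩ with hb'
  have hx2 : x = vq5V k x false a b := by
    funext i
    unfold vq5V
    split_ifs with h1 h2 h3'
    · rw [show i = ⟨k+2, by omega⟩ from Fin.ext h1, hx']
    · rw [show i = ⟨k+1, by omega⟩ from Fin.ext h2, ha]
    · rw [show i = ⟨k, by omega⟩ from Fin.ext h3', hb]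
    · rfl
  have hy2 : y = vq5V k x true a' b' := by
    funext i
    unfold vq5V
    split_ifs with h1 h2 h3'
    · rw [show i = ⟨k+2, by omega⟩ from Fin.ext h1, hy']
    · rw [show i = ⟨k+1, by omega⟩ from Fin.ext h2, ha']
    · rw [show i = ⟨k, by omega⟩ from Fin.ext h3', hb']
    · exact (heq i (by omega)).symm
  rw [hx2, hy2]
  obtain ⟨C, hC1, hC2, hC3⟩ := cycle5 (varietalCube (k+3))
    (vq5V k x false a b) (vq5V k x true a' b') (vq5V k x true (!a') b')
    (vq5V k x true (!a') (!b')) (vq5V k x false (!a) b)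
    (vq5V_adj_cross k h3 x _ _ _ _ _ _ (by simp) hc)
    (vq5V_adj_a k h3 x _ _ _ _ (by simp))
    (vq5V_adj_b k h3 x _ _ _ _ (by simp))
    (vq5V_adj_cross k h3 x _ _ _ _ _ _ (by simp) (vqCross_symm (vqCross_flip hc)))
    (vq5V_adj_a k h3 x _ _ _ _ (by simp))
    (vq5V_ne k x (Or.inl (by simp)))
    (vq5V_ne k x (Or.inl (by simp)))
    (vq5V_ne k x (Or.inr (Or.inr (by simp))))
    (vq5V_ne k x (Or.inl (by simp)))
    (vq5V_ne k x (Or.inl (by simp)))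
  exact ⟨_, C, hC1, hC2, hC3⟩
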